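/- Let a > 0 with a ≠ 1, let F:ℝ→ℝ be smooth, and let u_a(p) = F(ψ_a(p))Jp + φ_p((grad ψ_a)(p)). Then u_a is not localizable: there exists p ∈ S³ with D(|u_a|²)(p)[u_a(p)] ≠ 0. Consequently, since every KKPS field is localizable and localizability is preserved by isometries of the round sphere, there exist no A ∈ O(4) and no KKPS field w with w(Ap) = A(u_a(p)) for all p ∈ S³. -/

import Mathlib

open RealInnerProductSpace

noncomputable section

/-- ℝ⁴ with coordinates (x₁,y₁,x₂,y₂) and the Euclidean inner product; S³ is the set
of `p` with `‖p‖ = 1`. -/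
abbrev E4 := EuclideanSpace ℝ (Fin 4)

/-- The linear map `J(x₁,y₁,x₂,y₂) = (−y₁,x₁,−y₂,x₂)`; its restriction to S³ is the
Hopf field ξ. -/
def Jm (p : E4) : E4 := WithLp.toLp 2 ![-p 1, p 0, -p 3, p 2]

/-- The linear map `J'(x₁,y₁,x₂,y₂) = (−y₁,x₁,y₂,−x₂)`; its restriction to S³ is the
anti-Hopf field ξ'. -/
def Jm' (p : E4) : E4 := WithLp.toLp 2 ![-p 1, p 0, p 3, -p 2]

/-- The frame field `X₁(p) = (−x₂,y₂,x₁,−y₁)`. -/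
def X1 (p : E4) : E4 := WithLp.toLp 2 ![-p 2, p 3, p 0, -p 1]

/-- The frame field `X₂(p) = (−y₂,−x₂,y₁,x₁)`. -/
def X2 (p : E4) : E4 := WithLp.toLp 2 ![-p 3, -p 2, p 1, p 0]

/-- Orthogonal projection onto the tangent space of S³ at `p`: `P_p(v) = v − ⟨p,v⟩p`. -/
def Pt (p v : E4) : E4 := v - ⟪p, v⟫ • p

/-- A (smooth) tangent field on S³: a smooth map `u : ℝ⁴ → ℝ⁴` with `⟨p, u p⟩ = 0`
for every `p ∈ S³`. -/
def IsTangentField (u : E4 → E4) : Prop :=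
  ContDiff ℝ (⊤ : ℕ∞) u ∧ ∀ p : E4, ‖p‖ = 1 → ⟪p, u p⟫ = 0

/-- Levi-Civita covariant derivative of the round metric: `(∇_u v)(p) = P_p(Dv(p)[u(p)])`. -/
def scov (u v : E4 → E4) (p : E4) : E4 := Pt p (fderiv ℝ v p (u p))

/-- Spherical gradient: `(grad f)(p) = P_p(∇f(p))`. -/
def sgrad (f : E4 → ℝ) (p : E4) : E4 := Pt p (gradient f p)

/-- Spherical divergence: `(div u)(p) = tr(Du(p)) − ⟨Du(p)[p], p⟩`. -/
def sdiv (u : E4 → E4) (p : E4) : ℝ :=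
  LinearMap.trace ℝ E4 (fderiv ℝ u p).toLinearMap - ⟪fderiv ℝ u p p, p⟫

/-- Spherical Laplacian with geometers' sign: `Δf = −div (grad f)`. -/
def slap (f : E4 → ℝ) (p : E4) : ℝ := - sdiv (sgrad f) p

/-- The transverse complex structure of the standard Sasakian structure on S³:
`φ_p(v) = Jv + ⟨v, Jp⟩p`. -/
def phiT (p v : E4) : E4 := Jm v + ⟪v, Jm p⟫ • p

/-- `u` is a steady Euler field on S³ with pressure `pr`: `div u = 0` on S³ and
`(∇_u u)(p) = −(grad pr)(p)` for all `p ∈ S³`. -/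
def IsSteadyEulerWithPressure (u : E4 → E4) (pr : E4 → ℝ) : Prop :=
  ∀ p : E4, ‖p‖ = 1 → sdiv u p = 0 ∧ scov u u p = - sgrad pr p

/-- `u` is a steady Euler field on S³, for some smooth pressure. -/
def IsSteadyEuler (u : E4 → E4) : Prop :=
  ∃ pr : E4 → ℝ, ContDiff ℝ (⊤ : ℕ∞) pr ∧ IsSteadyEulerWithPressure u pr

/-- A tangent field `u` is localizable if `D(|u|²)(p)[u(p)] = 0` for all `p ∈ S³`. -/
def IsLocalizable (u : E4 → E4) : Prop :=
  ∀ p : E4, ‖p‖ = 1 → fderiv ℝ (fun q => ⟪u q, u q⟫) p (u p) = 0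

/-- The function `q(p) = x₁² + y₁²`. -/
def qf (p : E4) : ℝ := p 0 ^ 2 + p 1 ^ 2

/-- The KKPS family: `u(p) = A(q(p))·Jp + B(q(p))·J'p`. -/
def kkps (A B : ℝ → ℝ) (p : E4) : E4 := A (qf p) • Jm p + B (qf p) • Jm' p

/-- Determinant of four vectors in ℝ⁴ (given as rows). -/
def det4 (a b c d : E4) : ℝ :=
  Matrix.det (Matrix.of ![(fun i => a i), (fun i => b i), (fun i => c i), (fun i => d i)])

/-- Cross product of tangent vectors at `p ∈ S³`: `⟨v ×_p w, z⟩ = det(p,v,w,z)`. -/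
def crossS (p v w : E4) : E4 := WithLp.toLp 2 (fun i => det4 p v w (WithLp.toLp 2 (Pi.single i 1)))

/-- `c` is the curl of the tangent field `u` on S³: `c` is a tangent field such that
`⟨(∇_v u)(p), w⟩ − ⟨(∇_w u)(p), v⟩ = ⟨c(p), v ×_p w⟩` for all tangent `v, w` at `p ∈ S³`
(with the orientation convention given by `det4`, for which `curl ξ = 2ξ`). -/
def IsCurlOf (u c : E4 → E4) : Prop :=
  IsTangentField c ∧
  ∀ p : E4, ‖p‖ = 1 → ∀ v w : E4, ⟪p, v⟫ = 0 → ⟪p, w⟫ = 0 →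
    ⟪Pt p (fderiv ℝ u p v), w⟫ - ⟪Pt p (fderiv ℝ u p w), v⟫ = ⟪c p, crossS p v w⟫

/-- The Sasakian KKPS ansatz on S³: `u(p) = F(ψ(p))·Jp + φ_p((grad (G∘ψ))(p))`. -/
def ansatz (ψ : E4 → ℝ) (F G : ℝ → ℝ) (p : E4) : E4 :=
  F (ψ p) • Jm p + phiT p (sgrad (fun q => G (ψ q)) p)

/-- The quartic polynomial `ψ_a`, a deformation of Nomizu's isoparametric polynomial. -/
def ψa (a : ℝ) (p : E4) : ℝ :=
  (1/2) * ((p 0 ^ 2 + p 1 ^ 2 + p 2 ^ 2 + p 3 ^ 2) ^ 2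
      + (p 0 ^ 2 + p 1 ^ 2 - p 2 ^ 2 - p 3 ^ 2) ^ 2)
    + 2 * a * ((p 0 ^ 2 - p 1 ^ 2) * (p 2 ^ 2 - p 3 ^ 2) + 4 * p 0 * p 1 * p 2 * p 3)

/-- The field `u_a(p) = F(ψ_a(p))·Jp + φ_p((grad ψ_a)(p))`. -/
def nomizuField (a : ℝ) (F : ℝ → ℝ) (p : E4) : E4 :=
  F (ψa a p) • Jm p + phiT p (sgrad (ψa a) p)

/-- The field `u(p) = 2a₁(x₁y₂+y₁x₂)·X₁(p) + 2a₂(x₁x₂−y₁y₂)·X₂(p)`. -/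
def abField (a₁ a₂ : ℝ) (p : E4) : E4 :=
  (2 * a₁ * (p 0 * p 3 + p 1 * p 2)) • X1 p + (2 * a₂ * (p 0 * p 2 - p 1 * p 3)) • X2 p


----------------------------------------------------------------
-- Auxiliary machinery for statement14
----------------------------------------------------------------

@[fun_prop]
theorem diff_coord (i : Fin 4) : Differentiable ℝ (fun q : E4 => q i) :=
  (EuclideanSpace.proj (𝕜 := ℝ) i).differentiable

def evalPoly (l : List ℝ) (t : ℝ) : ℝ := l.foldr (fun c acc => c + t * acc) 0

theorem evalPoly_differentiable (l : List ℝ) : Differentiable ℝ (evalPoly l) := by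
  induction l with
  | nil => exact fun t => (hasDerivAt_const t (0:ℝ)).differentiableAt
  | cons c tl ih =>
      have h : evalPoly (c :: tl) = fun t => c + t * evalPoly tl t := by
        funext t; simp [evalPoly]
      rw [h]
      exact (differentiable_const c).add (differentiable_id.mul ih)

theorem evalPoly_hasDerivAt0 (l : List ℝ) :
    HasDerivAt (evalPoly l) (l.tail.headD 0) 0 := by
  cases l with
  | nil => exact hasDerivAt_const (0:ℝ) (0:ℝ)
  | cons c tl =>
      have h1 : HasDerivAt (fun t : ℝ => t * evalPoly tl t)
          ((1 : ℝ) * evalPoly tl 0 + 0 * (deriv (evalPoly tl) 0)) 0 :=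
        (hasDerivAt_id 0).mul ((evalPoly_differentiable tl 0).hasDerivAt)
      have h2 : HasDerivAt (evalPoly (c :: tl)) (evalPoly tl 0) 0 := by
        have h : evalPoly (c :: tl) = fun t => c + t * evalPoly tl t := by
          funext t; simp [evalPoly]
        rw [h]
        simpa using (h1.const_add c)
      have h3 : evalPoly tl 0 = (c :: tl).tail.headD 0 := by
        cases tl <;> simp [evalPoly]
      exact h3 ▸ h2

theorem evalPoly_zero (l : List ℝ) : evalPoly l 0 = l.headD 0 := by
  cases l <;> simp [evalPoly]

/-- The (ambient) gradient of `ψa`. -/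
def gPsi (a : ℝ) (q : E4) : E4 :=
  WithLp.toLp 2 ![2*q 0*((q 0^2+q 1^2+q 2^2+q 3^2)+(q 0^2+q 1^2-q 2^2-q 3^2)) + 2*a*(2*q 0*(q 2^2-q 3^2) + 4*q 1*q 2*q 3),
    2*q 1*((q 0^2+q 1^2+q 2^2+q 3^2)+(q 0^2+q 1^2-q 2^2-q 3^2)) + 2*a*(-2*q 1*(q 2^2-q 3^2) + 4*q 0*q 2*q 3),
    2*q 2*((q 0^2+q 1^2+q 2^2+q 3^2)-(q 0^2+q 1^2-q 2^2-q 3^2)) + 2*a*(2*q 2*(q 0^2-q 1^2) + 4*q 0*q 1*q 3),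
    2*q 3*((q 0^2+q 1^2+q 2^2+q 3^2)-(q 0^2+q 1^2-q 2^2-q 3^2)) + 2*a*(-2*q 3*(q 0^2-q 1^2) + 4*q 0*q 1*q 2)]

theorem hasFDerivAt_psi (a : ℝ) (q : E4) :
    HasFDerivAt (ψa a) ((InnerProductSpace.toDual ℝ E4) (gPsi a q)) q := by
  have h0 : HasFDerivAt (fun p : E4 => p 0) (EuclideanSpace.proj (𝕜 := ℝ) 0) q :=
    (EuclideanSpace.proj (𝕜 := ℝ) (0 : Fin 4)).hasFDerivAt
  have h1 : HasFDerivAt (fun p : E4 => p 1) (EuclideanSpace.proj (𝕜 := ℝ) 1) q :=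
    (EuclideanSpace.proj (𝕜 := ℝ) (1 : Fin 4)).hasFDerivAt
  have h2 : HasFDerivAt (fun p : E4 => p 2) (EuclideanSpace.proj (𝕜 := ℝ) 2) q :=
    (EuclideanSpace.proj (𝕜 := ℝ) (2 : Fin 4)).hasFDerivAt
  have h3 : HasFDerivAt (fun p : E4 => p 3) (EuclideanSpace.proj (𝕜 := ℝ) 3) q :=
    (EuclideanSpace.proj (𝕜 := ℝ) (3 : Fin 4)).hasFDerivAt
  have hn := (((h0.mul h0).add (h1.mul h1)).add (h2.mul h2)).add (h3.mul h3)
  have hd := (((h0.mul h0).add (h1.mul h1)).sub (h2.mul h2)).sub (h3.mul h3)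
  have hK := ((((h0.mul h0).sub (h1.mul h1)).mul ((h2.mul h2).sub (h3.mul h3))).add
      ((((h0.mul h1).mul h2).mul h3).const_mul 4))
  have hψ' := (((hn.mul hn).add (hd.mul hd)).const_mul (1/2 : ℝ)).add (hK.const_mul (2*a))
  have hfun : ψa a = (fun p : E4 =>
      (1/2) * ((p 0*p 0 + p 1*p 1 + p 2*p 2 + p 3*p 3) * (p 0*p 0 + p 1*p 1 + p 2*p 2 + p 3*p 3)
        + (p 0*p 0 + p 1*p 1 - p 2*p 2 - p 3*p 3) * (p 0*p 0 + p 1*p 1 - p 2*p 2 - p 3*p 3))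
      + 2*a * ((p 0*p 0 - p 1*p 1) * (p 2*p 2 - p 3*p 3) + 4 * (p 0 * p 1 * p 2 * p 3))) := by
    funext p; simp only [ψa]; ring
  rw [hfun]
  refine hψ'.congr_fderiv ?_
  refine ContinuousLinearMap.ext fun v => ?_
  simp only [ContinuousLinearMap.add_apply, ContinuousLinearMap.coe_smul', Pi.smul_apply,
    ContinuousLinearMap.coe_sub', Pi.sub_apply, smul_eq_mul,
    InnerProductSpace.toDual_apply_apply, PiLp.inner_apply, RCLike.inner_apply, conj_trivial,
    Fin.sum_univ_four, gPsi, Pi.mul_apply, Pi.add_apply, PiLp.toLp_apply, Matrix.cons_val_zero, Matrix.cons_val_one, Matrix.head_cons,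
    Matrix.cons_val_two, Matrix.tail_cons, Matrix.cons_val_three, PiLp.proj_apply]
  ring

theorem gradient_psi (a : ℝ) (q : E4) : gradient (ψa a) q = gPsi a q :=
  (hasGradientAt_iff_hasFDerivAt.mpr (hasFDerivAt_psi a q)).gradient

theorem differentiableAt_E4 {f : E4 → E4} {x : E4}
    (h : ∀ i, DifferentiableAt ℝ (fun q => f q i) x) : DifferentiableAt ℝ f x := by
  have h' : DifferentiableAt ℝ (fun q (i : Fin 4) => f q i) x := differentiableAt_pi.mpr h
  exact ((PiLp.continuousLinearEquiv 2 ℝ (fun _ : Fin 4 => ℝ)).symm.differentiableAt.comp x h' :)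

theorem uexp_eq (a : ℝ) (F : ℝ → ℝ) :
    nomizuField a F = fun q => F (ψa a q) • Jm q + phiT q (Pt q (gPsi a q)) := by
  funext q
  rw [nomizuField, sgrad, gradient_psi]

theorem diff_comp_coord {g : E4 → E4} {x : E4} (hg : DifferentiableAt ℝ g x) (j : Fin 4) :
    DifferentiableAt ℝ (fun q => g q j) x :=
  ((diff_coord j).differentiableAt).comp x hg

theorem diff_gPsi (a : ℝ) (x : E4) : DifferentiableAt ℝ (gPsi a) x := by
  apply differentiableAt_E4
  intro i
  have d : ∀ j : Fin 4, DifferentiableAt ℝ (fun q : E4 => q j) x :=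
    fun j => (diff_coord j).differentiableAt
  fin_cases i <;>
    · simp only [gPsi, Fin.isValue, Fin.zero_eta, Fin.mk_one, PiLp.toLp_apply, Matrix.cons_val_zero,
        Matrix.cons_val_one, Matrix.head_cons, Matrix.cons_val_two, Matrix.tail_cons,
        Matrix.cons_val_three, Matrix.cons_val_fin_one, Fin.reduceFinMk]
      fun_prop

theorem diff_Jm (x : E4) : DifferentiableAt ℝ Jm x := by
  apply differentiableAt_E4
  intro i
  have d : ∀ j : Fin 4, DifferentiableAt ℝ (fun q : E4 => q j) x :=
    fun j => (diff_coord j).differentiableAt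
  fin_cases i <;>
    · simp only [Jm, Fin.isValue, Fin.zero_eta, Fin.mk_one, PiLp.toLp_apply, Matrix.cons_val_zero,
        Matrix.cons_val_one, Matrix.head_cons, Matrix.cons_val_two, Matrix.tail_cons,
        Matrix.cons_val_three, Matrix.cons_val_fin_one, Fin.reduceFinMk]
      first
        | exact ((diff_coord _).differentiableAt).neg
        | exact (diff_coord _).differentiableAt

theorem diff_W (a : ℝ) (x : E4) :
    DifferentiableAt ℝ (fun q => phiT q (Pt q (gPsi a q))) x := by
  have hg : DifferentiableAt ℝ (fun q => Pt q (gPsi a q)) x := by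
    have hi : DifferentiableAt ℝ (fun q : E4 => (⟪q, gPsi a q⟫ : ℝ)) x :=
      DifferentiableAt.inner ℝ differentiableAt_id (diff_gPsi a x)
    exact (diff_gPsi a x).sub (hi.smul differentiableAt_id)
  have hJg : DifferentiableAt ℝ (fun q => Jm (Pt q (gPsi a q))) x := by
    apply differentiableAt_E4
    intro i
    fin_cases i <;>
      · simp only [Jm, PiLp.toLp_apply, Matrix.cons_val_zero, Matrix.cons_val_one, Matrix.head_cons,
          Matrix.cons_val_two, Matrix.tail_cons, Matrix.cons_val_three]
        first
          | exact (diff_comp_coord hg _).neg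
          | exact diff_comp_coord hg _
  have hJm2 : DifferentiableAt ℝ (fun q : E4 => (⟪Pt q (gPsi a q), Jm q⟫ : ℝ)) x :=
    DifferentiableAt.inner ℝ hg (diff_Jm x)
  exact hJg.add (hJm2.smul differentiableAt_id)

theorem diff_uexp (a : ℝ) {F : ℝ → ℝ} (hF : ContDiff ℝ (⊤ : ℕ∞) F) (x : E4) :
    DifferentiableAt ℝ (fun q => F (ψa a q) • Jm q + phiT q (Pt q (gPsi a q))) x := by
  have hψ : DifferentiableAt ℝ (ψa a) x := (hasFDerivAt_psi a x).differentiableAt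
  have hFψ : DifferentiableAt ℝ (fun q => F (ψa a q)) x :=
    ((hF.differentiable (by simp)) (ψa a x)).comp x hψ
  exact (hFψ.smul (diff_Jm x)).add (diff_W a x)

theorem diff_f (a : ℝ) {F : ℝ → ℝ} (hF : ContDiff ℝ (⊤ : ℕ∞) F) (x : E4) :
    DifferentiableAt ℝ (fun q => (⟪nomizuField a F q, nomizuField a F q⟫ : ℝ)) x := by
  rw [uexp_eq a F]
  exact DifferentiableAt.inner ℝ (diff_uexp a hF x) (diff_uexp a hF x)

/-- Base point. -/
def pp : E4 := WithLp.toLp 2 (![2/3, 1/3, 2/3, 0] : Fin 4 → ℝ)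

/-- Value of `φ_p((grad ψ_a)(p))` at `pp`. -/
def ww (a : ℝ) : E4 := WithLp.toLp 2 ![((-16/243 : ℝ) + (80/81 : ℝ)*a), ((32/243 : ℝ) + (32/81 : ℝ)*a), ((-32/27 : ℝ)*a), ((-40/243 : ℝ) + (8/81 : ℝ)*a)]

/-- The direction `u_a(pp)` with `s = F(ψ_a(pp))`. -/
def vv (a s : ℝ) : E4 := s • Jm pp + ww a

def cca (a : ℝ) : ℝ := 41/81 + (8/27)*a

def LPsi (a s : ℝ) : List ℝ := [((41/81 : ℝ) + (8/27 : ℝ)*a), (0:ℝ), ((25600/531441 : ℝ) + (320/6561 : ℝ)*s + (82/81 : ℝ)*s^2 + (-8576/59049 : ℝ)*a + (-128/2187 : ℝ)*a*s + (16/27 : ℝ)*a*s^2 + (152320/19683 : ℝ)*a^2 + (1856/729 : ℝ)*a^2*s + (-30848/19683 : ℝ)*a^3), ((1024/729 : ℝ)*a*s + (-1024/729 : ℝ)*a^3*s), ((4198400/3486784401 : ℝ) + (-102400/43046721 : ℝ)*s + (25600/177147 : ℝ)*s^2 + (320/6561 : ℝ)*s^3 + (41/81 : ℝ)*s^4 +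 (-2539520/1162261467 : ℝ)*a + (81920/14348907 : ℝ)*a*s + (-3968/19683 : ℝ)*a*s^2 + (-128/2187 : ℝ)*a*s^3 + (8/27 : ℝ)*a*s^4 + (48717824/387420489 : ℝ)*a^2 + (-401408/1594323 : ℝ)*a^2*s + (1792/729 : ℝ)*a^2*s^2 + (1856/729 : ℝ)*a^2*s^3 + (-9846784/129140163 : ℝ)*a^3 + (475136/1594323 : ℝ)*a^3*s + (-29312/6561 : ℝ)*a^3*s^2 + (137433088/43046721 : ℝ)*a^4 + (-3444736/531441 : ℝ)*a^4*s + (27557888/14348907 : ℝ)*a^5)]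

def LJ0 (a s : ℝ) : List ℝ := [((-1/3 : ℝ)), ((-32/243 : ℝ) + (-2/3 : ℝ)*s + (-32/81 : ℝ)*a)]
def LJ1 (a s : ℝ) : List ℝ := [((2/3 : ℝ)), ((-16/243 : ℝ) + (-1/3 : ℝ)*s + (80/81 : ℝ)*a)]
def LJ2 (a s : ℝ) : List ℝ := [(0:ℝ), ((40/243 : ℝ) + (-2/3 : ℝ)*s + (-8/81 : ℝ)*a)]
def LJ3 (a s : ℝ) : List ℝ := [((2/3 : ℝ)), ((-32/27 : ℝ)*a)]

def LW0 (a s : ℝ) : List ℝ := [((-16/243 : ℝ) + (80/81 : ℝ)*a), ((-512/19683 : ℝ) + (-32/243 : ℝ)*s + (-7936/6561 : ℝ)*a + (-32/81 : ℝ)*a*s + (-2816/2187 : ℝ)*a^2), ((56320/1594323 : ℝ) + (-4480/19683 : ℝ)*s + (148/243 : ℝ)*s^2 + (-192256/177147 : ℝ)*a + (-25472/6561 : ℝ)*a*s + (112/81 : ℝ)*a*s^2 + (11776/2187 : ℝ)*a^2 + (-256/2187 : ℝ)*a^2*s + (-154880/59049 : ℝ)*a^3), ((1802240/129140163 : ℝ)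 + (-10240/531441 : ℝ)*s + (-1408/6561 : ℝ)*s^2 + (296/243 : ℝ)*s^3 + (-1515520/43046721 : ℝ)*a + (242176/177147 : ℝ)*a*s + (128/81 : ℝ)*a*s^2 + (32/81 : ℝ)*a*s^3 + (16113664/4782969 : ℝ)*a^2 + (1154048/59049 : ℝ)*a^2*s + (3328/729 : ℝ)*a^2*s^2 + (42082304/4782969 : ℝ)*a^3 + (48640/6561 : ℝ)*a^3*s + (1040384/1594323 : ℝ)*a^4), ((16793600/10460353203 : ℝ) + (-409600/129140163 : ℝ)*s + (102400/531441 : ℝ)*s^2 + (1280/19683 : ℝ)*s^3 + (164/243 : ℝ)*s^4 + (-10158080/3486784401 : ℝ)*a + (32178176/43046721 : ℝ)*a*s + (205312/59049 : ℝ)*a*s^2 + (-512/6561 : ℝ)*a*s^3 + (32/81 : ℝ)*a*s^4 + (194871296/1162261467 : ℝ)*a^2 + (9011200/4782969 : ℝ)*a^2*s + (7168/2187 : ℝ)*a^2*s^2 + (7424/2187 : ℝ)*a^2*s^3 + (-39387136/387420489 : ℝ)*a^3 + (-1638400/4782969 : ℝ)*a^3*s + (-190976/19683 : ℝ)*a^3*s^2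 + (549732352/129140163 : ℝ)*a^4 + (-17317888/1594323 : ℝ)*a^4*s + (110231552/43046721 : ℝ)*a^5), ((537395200/847288609443 : ℝ) + (20480000/10460353203 : ℝ)*s + (9011200/129140163 : ℝ)*s^2 + (655360/1594323 : ℝ)*s^3 + (7808/19683 : ℝ)*s^4 + (328/243 : ℝ)*s^5 + (2621440/3486784401 : ℝ)*a + (-22937600/3486784401 : ℝ)*a*s + (5914624/43046721 : ℝ)*a*s^2 + (-87040/177147 : ℝ)*a*s^3 + (5248/6561 : ℝ)*a*s^4 + (64/81 : ℝ)*a*s^5 + (1970274304/31381059609 : ℝ)*a^2 + (246087680/1162261467 : ℝ)*a^2*s + (1458176/4782969 : ℝ)*a^2*s^2 + (51200/6561 : ℝ)*a^2*s^3 + (15872/2187 : ℝ)*a^2*s^4 + (4975493120/31381059609 : ℝ)*a^3 + (-172097536/387420489 : ℝ)*a^3*s + (11124736/4782969 : ℝ)*a^3*s^2 + (-465920/59049 : ℝ)*a^3*s^3 + (1814560768/1162261467 : ℝ)*a^4 + (719355904/129140163 : ℝ)*a^4*s + (-38813696/1594323 : ℝ)*a^4*s^2 + (7039614976/1162261467 :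 ℝ)*a^5 + (-220463104/43046721 : ℝ)*a^5*s + (3527409664/1162261467 : ℝ)*a^6)]
def LW1 (a s : ℝ) : List ℝ := [((32/243 : ℝ) + (32/81 : ℝ)*a), ((-256/19683 : ℝ) + (-16/243 : ℝ)*s + (26752/6561 : ℝ)*a + (80/81 : ℝ)*a*s + (-7552/2187 : ℝ)*a^2), ((-112640/1594323 : ℝ) + (8960/19683 : ℝ)*s + (-296/243 : ℝ)*s^2 + (-5632/19683 : ℝ)*a + (-12032/6561 : ℝ)*a*s + (-32/81 : ℝ)*a*s^2 + (-627712/59049 : ℝ)*a^2 + (-11776/2187 : ℝ)*a^2*s + (91648/59049 : ℝ)*a^3), ((901120/129140163 : ℝ) + (-5120/531441 : ℝ)*s + (-704/6561 : ℝ)*s^2 + (148/243 : ℝ)*s^3 + (-5550080/43046721 : ℝ)*a + (-572672/177147 : ℝ)*a*s + (-3776/2187 : ℝ)*a*s^2 + (112/81 : ℝ)*a*s^3 + (11005952/4782969 : ℝ)*a^2 + (605696/59049 : ℝ)*a^2*s + (-128/27 : ℝ)*a^2*s^2 + (-125603840/4782969 : ℝ)*a^3 + (-273664/19683 : ℝ)*a^3*s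 + (18067456/1594323 : ℝ)*a^4), ((-33587200/10460353203 : ℝ) + (819200/129140163 : ℝ)*s + (-204800/531441 : ℝ)*s^2 + (-2560/19683 : ℝ)*s^3 + (-328/243 : ℝ)*s^4 + (20316160/3486784401 : ℝ)*a + (15269888/43046721 : ℝ)*a*s + (142336/59049 : ℝ)*a*s^2 + (1024/6561 : ℝ)*a*s^3 + (-64/81 : ℝ)*a*s^4 + (-389742592/1162261467 : ℝ)*a^2 + (-23330816/4782969 : ℝ)*a^2*s + (-14336/2187 : ℝ)*a^2*s^2 + (-14848/2187 : ℝ)*a^2*s^3 + (78774272/387420489 : ℝ)*a^3 + (-5570560/4782969 : ℝ)*a^3*s + (197632/19683 : ℝ)*a^3*s^2 + (-1099464704/129140163 : ℝ)*a^4 + (36405248/1594323 : ℝ)*a^4*s + (-220463104/43046721 : ℝ)*a^5), ((268697600/847288609443 : ℝ) + (10240000/10460353203 : ℝ)*s + (4505600/129140163 : ℝ)*s^2 + (327680/1594323 : ℝ)*s^3 + (3904/19683 : ℝ)*s^4 + (164/243 : ℝ)*s^5 + (-502005760/94143178827 : ℝ)*a + (27852800/3486784401 : ℝ)*a*s + (-26533888/43046721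 : ℝ)*a*s^2 + (-28160/59049 : ℝ)*a*s^3 + (-13120/6561 : ℝ)*a*s^4 + (32/81 : ℝ)*a*s^5 + (436731904/10460353203 : ℝ)*a^2 + (91586560/1162261467 : ℝ)*a^2*s + (5300224/4782969 : ℝ)*a^2*s^2 + (246784/59049 : ℝ)*a^2*s^3 + (4864/2187 : ℝ)*a^2*s^4 + (-16219897856/31381059609 : ℝ)*a^3 + (376373248/387420489 : ℝ)*a^3*s + (-50176000/4782969 : ℝ)*a^3*s^2 + (-945664/59049 : ℝ)*a^3*s^3 + (3982229504/3486784401 : ℝ)*a^4 + (177225728/129140163 : ℝ)*a^4*s + (14360576/1594323 : ℝ)*a^4*s^2 + (-4690542592/387420489 : ℝ)*a^5 + (1212547072/43046721 : ℝ)*a^5*s + (-8818524160/1162261467 : ℝ)*a^6)]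
def LW2 (a s : ℝ) : List ℝ := [((-32/27 : ℝ)*a), ((-800/19683 : ℝ) + (40/243 : ℝ)*s + (-4864/6561 : ℝ)*a + (-8/81 : ℝ)*a*s + (-1760/2187 : ℝ)*a^2), ((-155648/177147 : ℝ)*a + (10496/2187 : ℝ)*a*s + (-32/27 : ℝ)*a*s^2 + (-4096/59049 : ℝ)*a^2 + (2048/729 : ℝ)*a^2*s + (77824/19683 : ℝ)*a^3), ((-1792000/129140163 : ℝ) + (-64000/531441 : ℝ)*s + (2240/6561 : ℝ)*s^2 + (368/243 : ℝ)*s^3 + (3921920/43046721 : ℝ)*a + (-1024/59049 : ℝ)*a*s + (-1760/2187 : ℝ)*a*s^2 + (56/81 : ℝ)*a*s^3 + (-19810304/4782969 : ℝ)*a^2 + (283136/19683 : ℝ)*a^2*s + (1184/729 : ℝ)*a^2*s^2 + (18581504/4782969 : ℝ)*a^3 + (69632/19683 : ℝ)*a^3*s + (5427200/1594323 : ℝ)*a^4), ((-163840/177147 : ℝ)*a*s + (8192/2187 : ℝ)*a*s^2 + (32768/59049 : ℝ)*a^2*s + (163840/177147 : ℝ)*a^3*s + (-8192/2187 : ℝ)*a^3*s^2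 + (-32768/59049 : ℝ)*a^4*s), ((-671744000/847288609443 : ℝ) + (49971200/10460353203 : ℝ)*s + (-13107200/129140163 : ℝ)*s^2 + (563200/1594323 : ℝ)*s^3 + (-4000/19683 : ℝ)*s^4 + (328/243 : ℝ)*s^5 + (180224000/94143178827 : ℝ)*a + (-36700160/3486784401 : ℝ)*a*s + (8826880/43046721 : ℝ)*a*s^2 + (-84992/177147 : ℝ)*a*s^3 + (-992/6561 : ℝ)*a*s^4 + (64/81 : ℝ)*a*s^5 + (-2625372160/31381059609 : ℝ)*a^2 + (585039872/1162261467 : ℝ)*a^2*s + (-11333632/4782969 : ℝ)*a^2*s^2 + (286720/59049 : ℝ)*a^2*s^3 + (15104/2187 : ℝ)*a^2*s^4 + (3134455808/31381059609 : ℝ)*a^3 + (-193331200/387420489 : ℝ)*a^3*s + (22515712/4782969 : ℝ)*a^3*s^2 + (-644096/59049 : ℝ)*a^3*s^3 + (-7434797056/3486784401 : ℝ)*a^4 + (1665826816/129140163 : ℝ)*a^4*s + (-30371840/1594323 : ℝ)*a^4*s^2 + (-3801088/1162261467 : ℝ)*a^5 + (110231552/43046721 : ℝ)*a^5*s + (881852416/1162261467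 : ℝ)*a^6)]
def LW3 (a s : ℝ) : List ℝ := [((-40/243 : ℝ) + (8/81 : ℝ)*a), ((-10240/2187 : ℝ)*a + (-32/27 : ℝ)*a*s + (2048/729 : ℝ)*a^2), ((-89600/1594323 : ℝ) + (-14080/19683 : ℝ)*s + (-368/243 : ℝ)*s^2 + (31744/177147 : ℝ)*a + (448/6561 : ℝ)*a*s + (-56/81 : ℝ)*a*s^2 + (-584192/59049 : ℝ)*a^2 + (-5056/2187 : ℝ)*a^2*s + (108544/59049 : ℝ)*a^3), ((532480/4782969 : ℝ)*a + (-425984/177147 : ℝ)*a*s + (5504/2187 : ℝ)*a*s^2 + (-32/27 : ℝ)*a*s^3 + (-327680/531441 : ℝ)*a^2 + (-28672/59049 : ℝ)*a^2*s + (5120/729 : ℝ)*a^2*s^2 + (1810432/59049 : ℝ)*a^3 + (471040/19683 : ℝ)*a^3*s + (-1949696/177147 : ℝ)*a^4), ((-33587200/10460353203 : ℝ) + (819200/129140163 : ℝ)*s + (-204800/531441 : ℝ)*s^2 + (-2560/19683 : ℝ)*s^3 + (-328/243 : ℝ)*s^4 + (20316160/3486784401 : ℝ)*a + (-655360/43046721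 : ℝ)*a*s + (31744/59049 : ℝ)*a*s^2 + (1024/6561 : ℝ)*a*s^3 + (-64/81 : ℝ)*a*s^4 + (-389742592/1162261467 : ℝ)*a^2 + (35061760/4782969 : ℝ)*a^2*s + (-14336/2187 : ℝ)*a^2*s^2 + (-14848/2187 : ℝ)*a^2*s^3 + (78774272/387420489 : ℝ)*a^3 + (-3801088/4782969 : ℝ)*a^3*s + (234496/19683 : ℝ)*a^3*s^2 + (-1099464704/129140163 : ℝ)*a^4 + (16941056/1594323 : ℝ)*a^4*s + (-220463104/43046721 : ℝ)*a^5), ((537395200/94143178827 : ℝ)*a + (-13107200/1162261467 : ℝ)*a*s + (3276800/4782969 : ℝ)*a*s^2 + (40960/177147 : ℝ)*a*s^3 + (5248/2187 : ℝ)*a*s^4 + (-325058560/31381059609 : ℝ)*a^2 + (10485760/387420489 : ℝ)*a^2*s + (-507904/531441 : ℝ)*a^2*s^2 + (-16384/59049 : ℝ)*a^2*s^3 + (1024/729 : ℝ)*a^2*s^4 + (6235881472/10460353203 : ℝ)*a^3 + (-51380224/43046721 : ℝ)*a^3*s + (229376/19683 : ℝ)*a^3*s^2 + (237568/19683 : ℝ)*a^3*s^3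 + (-1260388352/3486784401 : ℝ)*a^4 + (60817408/43046721 : ℝ)*a^4*s + (-3751936/177147 : ℝ)*a^4*s^2 + (17591435264/1162261467 : ℝ)*a^5 + (-440926208/14348907 : ℝ)*a^5*s + (3527409664/387420489 : ℝ)*a^6)]

theorem pp_norm : ‖pp‖ = 1 := by
  rw [EuclideanSpace.norm_eq]
  simp only [pp, Fin.sum_univ_four, PiLp.toLp_apply, Matrix.cons_val_zero, Matrix.cons_val_one, Matrix.head_cons,
    Matrix.cons_val_two, Matrix.tail_cons, Matrix.cons_val_three, Real.norm_eq_abs, sq_abs]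
  rw [show ((2/3:ℝ))^2 + (1/3:ℝ)^2 + (2/3:ℝ)^2 + (0:ℝ)^2 = 1 by norm_num]
  exact Real.sqrt_one

theorem psi_pp (a : ℝ) : ψa a pp = cca a := by
  simp only [ψa, pp, cca, PiLp.toLp_apply, Matrix.cons_val_zero, Matrix.cons_val_one, Matrix.head_cons,
    Matrix.cons_val_two, Matrix.tail_cons, Matrix.cons_val_three]
  ring

theorem w_pp (a : ℝ) : phiT pp (Pt pp (gPsi a pp)) = ww a := by
  ext i
  fin_cases i <;>
    · simp only [phiT, Pt, gPsi, Jm, pp, ww, PiLp.inner_apply, RCLike.inner_apply, conj_trivial,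
        Fin.sum_univ_four, PiLp.add_apply, PiLp.smul_apply, PiLp.sub_apply, smul_eq_mul,
        PiLp.toLp_apply, Matrix.cons_val_zero, Matrix.cons_val_one, Matrix.head_cons,
        Matrix.cons_val_two, Matrix.tail_cons, Matrix.cons_val_three]
      ring

theorem u_pp (a : ℝ) (F : ℝ → ℝ) : nomizuField a F pp = vv a (F (cca a)) := by
  rw [uexp_eq]
  show F (ψa a pp) • Jm pp + phiT pp (Pt pp (gPsi a pp)) = vv a (F (cca a))
  rw [psi_pp, w_pp]
  rfl


set_option maxHeartbeats 2000000 in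
theorem psi_curve (a s t : ℝ) :
    ψa a (pp + t • vv a s) = evalPoly (LPsi a s) t := by
  simp only [vv, ww, pp, Jm, phiT, Pt, gPsi, ψa, evalPoly, PiLp.inner_apply, RCLike.inner_apply, conj_trivial,
      Fin.sum_univ_four, PiLp.add_apply, PiLp.smul_apply, PiLp.sub_apply, smul_eq_mul,
      PiLp.toLp_apply, Matrix.cons_val_zero, Matrix.cons_val_one, Matrix.head_cons, Matrix.cons_val_two,
      Matrix.tail_cons, Matrix.cons_val_three, List.foldr, LPsi]
  ring

set_option maxHeartbeats 2000000 in
theorem Jm_curve0 (a s t : ℝ) :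
    Jm (pp + t • vv a s) 0 = evalPoly (LJ0 a s) t := by
  simp only [vv, ww, pp, Jm, phiT, Pt, gPsi, ψa, evalPoly, PiLp.inner_apply, RCLike.inner_apply, conj_trivial,
      Fin.sum_univ_four, PiLp.add_apply, PiLp.smul_apply, PiLp.sub_apply, smul_eq_mul,
      PiLp.toLp_apply, Matrix.cons_val_zero, Matrix.cons_val_one, Matrix.head_cons, Matrix.cons_val_two,
      Matrix.tail_cons, Matrix.cons_val_three, List.foldr, LJ0]
  ring

set_option maxHeartbeats 2000000 in
theorem Jm_curve1 (a s t : ℝ) :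
    Jm (pp + t • vv a s) 1 = evalPoly (LJ1 a s) t := by
  simp only [vv, ww, pp, Jm, phiT, Pt, gPsi, ψa, evalPoly, PiLp.inner_apply, RCLike.inner_apply, conj_trivial,
      Fin.sum_univ_four, PiLp.add_apply, PiLp.smul_apply, PiLp.sub_apply, smul_eq_mul,
      PiLp.toLp_apply, Matrix.cons_val_zero, Matrix.cons_val_one, Matrix.head_cons, Matrix.cons_val_two,
      Matrix.tail_cons, Matrix.cons_val_three, List.foldr, LJ1]
  ring

set_option maxHeartbeats 2000000 in
theorem Jm_curve2 (a s t : ℝ) :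
    Jm (pp + t • vv a s) 2 = evalPoly (LJ2 a s) t := by
  simp only [vv, ww, pp, Jm, phiT, Pt, gPsi, ψa, evalPoly, PiLp.inner_apply, RCLike.inner_apply, conj_trivial,
      Fin.sum_univ_four, PiLp.add_apply, PiLp.smul_apply, PiLp.sub_apply, smul_eq_mul,
      PiLp.toLp_apply, Matrix.cons_val_zero, Matrix.cons_val_one, Matrix.head_cons, Matrix.cons_val_two,
      Matrix.tail_cons, Matrix.cons_val_three, List.foldr, LJ2]
  ring

set_option maxHeartbeats 2000000 in
theorem Jm_curve3 (a s t : ℝ) :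
    Jm (pp + t • vv a s) 3 = evalPoly (LJ3 a s) t := by
  simp only [vv, ww, pp, Jm, phiT, Pt, gPsi, ψa, evalPoly, PiLp.inner_apply, RCLike.inner_apply, conj_trivial,
      Fin.sum_univ_four, PiLp.add_apply, PiLp.smul_apply, PiLp.sub_apply, smul_eq_mul,
      PiLp.toLp_apply, Matrix.cons_val_zero, Matrix.cons_val_one, Matrix.head_cons, Matrix.cons_val_two,
      Matrix.tail_cons, Matrix.cons_val_three, List.foldr, LJ3]
  ring

set_option maxHeartbeats 2000000 in
theorem comp0 (a s t : ℝ) :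
    phiT (pp + t • vv a s) (Pt (pp + t • vv a s) (gPsi a (pp + t • vv a s))) 0
      = evalPoly (LW0 a s) t := by
  simp only [vv, ww, pp, Jm, phiT, Pt, gPsi, ψa, evalPoly, PiLp.inner_apply, RCLike.inner_apply, conj_trivial,
      Fin.sum_univ_four, PiLp.add_apply, PiLp.smul_apply, PiLp.sub_apply, smul_eq_mul,
      PiLp.toLp_apply, Matrix.cons_val_zero, Matrix.cons_val_one, Matrix.head_cons, Matrix.cons_val_two,
      Matrix.tail_cons, Matrix.cons_val_three, List.foldr, LW0]
  ring

set_option maxHeartbeats 2000000 in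
theorem comp1 (a s t : ℝ) :
    phiT (pp + t • vv a s) (Pt (pp + t • vv a s) (gPsi a (pp + t • vv a s))) 1
      = evalPoly (LW1 a s) t := by
  simp only [vv, ww, pp, Jm, phiT, Pt, gPsi, ψa, evalPoly, PiLp.inner_apply, RCLike.inner_apply, conj_trivial,
      Fin.sum_univ_four, PiLp.add_apply, PiLp.smul_apply, PiLp.sub_apply, smul_eq_mul,
      PiLp.toLp_apply, Matrix.cons_val_zero, Matrix.cons_val_one, Matrix.head_cons, Matrix.cons_val_two,
      Matrix.tail_cons, Matrix.cons_val_three, List.foldr, LW1]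
  ring

set_option maxHeartbeats 2000000 in
theorem comp2 (a s t : ℝ) :
    phiT (pp + t • vv a s) (Pt (pp + t • vv a s) (gPsi a (pp + t • vv a s))) 2
      = evalPoly (LW2 a s) t := by
  simp only [vv, ww, pp, Jm, phiT, Pt, gPsi, ψa, evalPoly, PiLp.inner_apply, RCLike.inner_apply, conj_trivial,
      Fin.sum_univ_four, PiLp.add_apply, PiLp.smul_apply, PiLp.sub_apply, smul_eq_mul,
      PiLp.toLp_apply, Matrix.cons_val_zero, Matrix.cons_val_one, Matrix.head_cons, Matrix.cons_val_two,
      Matrix.tail_cons, Matrix.cons_val_three, List.foldr, LW2]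
  ring

set_option maxHeartbeats 2000000 in
theorem comp3 (a s t : ℝ) :
    phiT (pp + t • vv a s) (Pt (pp + t • vv a s) (gPsi a (pp + t • vv a s))) 3
      = evalPoly (LW3 a s) t := by
  simp only [vv, ww, pp, Jm, phiT, Pt, gPsi, ψa, evalPoly, PiLp.inner_apply, RCLike.inner_apply, conj_trivial,
      Fin.sum_univ_four, PiLp.add_apply, PiLp.smul_apply, PiLp.sub_apply, smul_eq_mul,
      PiLp.toLp_apply, Matrix.cons_val_zero, Matrix.cons_val_one, Matrix.head_cons, Matrix.cons_val_two,
      Matrix.tail_cons, Matrix.cons_val_three, List.foldr, LW3]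
  ring


theorem key_fderiv (a : ℝ) (F : ℝ → ℝ) (hF : ContDiff ℝ (⊤ : ℕ∞) F) :
    fderiv ℝ (fun q => (⟪nomizuField a F q, nomizuField a F q⟫ : ℝ)) pp (nomizuField a F pp)
      = 2048/729 * (a - a^3) := by
  set s : ℝ := F (cca a) with hs
  have hγ : HasDerivAt (fun t : ℝ => pp + t • vv a s) (vv a s) 0 := by
    simpa using (((hasDerivAt_id (0:ℝ)).smul_const (vv a s)).const_add pp)
  have h00 : pp + (0:ℝ) • vv a s = pp := by simp
  have hdiff : DifferentiableAt ℝ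
      (fun q => (⟪nomizuField a F q, nomizuField a F q⟫ : ℝ)) (pp + (0:ℝ) • vv a s) := by
    rw [h00]; exact diff_f a hF pp
  have hchain :
      HasDerivAt (fun t : ℝ => (⟪nomizuField a F (pp + t • vv a s),
          nomizuField a F (pp + t • vv a s)⟫ : ℝ))
        (fderiv ℝ (fun q => (⟪nomizuField a F q, nomizuField a F q⟫ : ℝ)) pp (vv a s)) 0 := by
    have := hdiff.hasFDerivAt.comp_hasDerivAt 0 hγ
    rwa [h00] at this
  have hcurve : (fun t : ℝ => (⟪nomizuField a F (pp + t • vv a s),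
          nomizuField a F (pp + t • vv a s)⟫ : ℝ))
      = (fun t : ℝ =>
        (((F (evalPoly (LPsi a s) t) * evalPoly (LJ0 a s) t + evalPoly (LW0 a s) t) *
          (F (evalPoly (LPsi a s) t) * evalPoly (LJ0 a s) t + evalPoly (LW0 a s) t) +
         (F (evalPoly (LPsi a s) t) * evalPoly (LJ1 a s) t + evalPoly (LW1 a s) t) *
          (F (evalPoly (LPsi a s) t) * evalPoly (LJ1 a s) t + evalPoly (LW1 a s) t)) +
         (F (evalPoly (LPsi a s) t) * evalPoly (LJ2 a s) t + evalPoly (LW2 a s) t) *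
          (F (evalPoly (LPsi a s) t) * evalPoly (LJ2 a s) t + evalPoly (LW2 a s) t)) +
         (F (evalPoly (LPsi a s) t) * evalPoly (LJ3 a s) t + evalPoly (LW3 a s) t) *
          (F (evalPoly (LPsi a s) t) * evalPoly (LJ3 a s) t + evalPoly (LW3 a s) t)) := by
    funext t
    rw [uexp_eq a F]
    simp only [PiLp.inner_apply, RCLike.inner_apply, conj_trivial, Fin.sum_univ_four,
      PiLp.add_apply, PiLp.smul_apply, smul_eq_mul]
    rw [psi_curve a s t, comp0 a s t, comp1 a s t, comp2 a s t, comp3 a s t,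
      Jm_curve0 a s t, Jm_curve1 a s t, Jm_curve2 a s t, Jm_curve3 a s t]
    try ring
  have hP0 : HasDerivAt (fun t : ℝ => evalPoly (LPsi a s) t) 0 0 := by
    have := evalPoly_hasDerivAt0 (LPsi a s)
    simpa [LPsi] using this
  have hFat : HasDerivAt F (deriv F (evalPoly (LPsi a s) 0)) (evalPoly (LPsi a s) 0) :=
    ((hF.differentiable (by simp)) (evalPoly (LPsi a s) 0)).hasDerivAt
  have hFP : HasDerivAt (fun t : ℝ => F (evalPoly (LPsi a s) t))
      (deriv F (evalPoly (LPsi a s) 0) * 0) 0 := by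
    simpa [Function.comp_def] using (hFat.comp 0 hP0)
  have hJd0 := evalPoly_hasDerivAt0 (LJ0 a s)
  have hJd1 := evalPoly_hasDerivAt0 (LJ1 a s)
  have hJd2 := evalPoly_hasDerivAt0 (LJ2 a s)
  have hJd3 := evalPoly_hasDerivAt0 (LJ3 a s)
  have hWd0 := evalPoly_hasDerivAt0 (LW0 a s)
  have hWd1 := evalPoly_hasDerivAt0 (LW1 a s)
  have hWd2 := evalPoly_hasDerivAt0 (LW2 a s)
  have hWd3 := evalPoly_hasDerivAt0 (LW3 a s)
  have hu0 := (hFP.mul hJd0).add hWd0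
  have hu1 := (hFP.mul hJd1).add hWd1
  have hu2 := (hFP.mul hJd2).add hWd2
  have hu3 := (hFP.mul hJd3).add hWd3
  have hsum := ((((hu0.mul hu0).add (hu1.mul hu1)).add (hu2.mul hu2)).add (hu3.mul hu3))
  rw [u_pp a F, ← hs]
  have hval := (hcurve ▸ hchain).unique hsum
  rw [hval]
  simp only [LPsi, LJ0, LJ1, LJ2, LJ3, LW0, LW1, LW2, LW3, evalPoly, List.foldr,
    List.tail_cons, List.headD_cons, Pi.mul_apply, Pi.add_apply, mul_zero, zero_mul, add_zero, zero_add]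
  ring

----------------------------------------------------------------
-- Part 2: KKPS fields are localizable; transfer along isometries
----------------------------------------------------------------

def Hfun (A B : ℝ → ℝ) : ℝ × ℝ → ℝ := fun y =>
  (A y.1 * A y.1 + B y.1 * B y.1) * (y.1 + y.2) + 2 * (A y.1 * B y.1) * (y.1 - y.2)

def pifun : E4 → ℝ × ℝ := fun q => (q 0 ^ 2 + q 1 ^ 2, q 2 ^ 2 + q 3 ^ 2)

theorem kkps_eq (A B : ℝ → ℝ) :
    (fun q : E4 => (⟪kkps A B q, kkps A B q⟫ : ℝ)) = Hfun A B ∘ pifun := by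
  funext q
  simp only [kkps, qf, Jm, Jm', Hfun, pifun, Function.comp_apply, PiLp.inner_apply,
    RCLike.inner_apply, conj_trivial, Fin.sum_univ_four, PiLp.add_apply, PiLp.smul_apply,
    smul_eq_mul, PiLp.toLp_apply, Matrix.cons_val_zero, Matrix.cons_val_one, Matrix.head_cons,
    Matrix.cons_val_two, Matrix.tail_cons, Matrix.cons_val_three]
  ring

theorem pifun_eq : pifun = (fun q : E4 => (q 0 * q 0 + q 1 * q 1, q 2 * q 2 + q 3 * q 3)) := by
  funext q
  simp [pifun, pow_two]

theorem pifun_hasFDeriv (x : E4) :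
    HasFDerivAt pifun
      ((x 0 • EuclideanSpace.proj (𝕜 := ℝ) (0 : Fin 4) + x 0 • EuclideanSpace.proj (𝕜 := ℝ) (0 : Fin 4) +
        (x 1 • EuclideanSpace.proj (𝕜 := ℝ) (1 : Fin 4) + x 1 • EuclideanSpace.proj (𝕜 := ℝ) (1 : Fin 4))).prod
       (x 2 • EuclideanSpace.proj (𝕜 := ℝ) (2 : Fin 4) + x 2 • EuclideanSpace.proj (𝕜 := ℝ) (2 : Fin 4) +
        (x 3 • EuclideanSpace.proj (𝕜 := ℝ) (3 : Fin 4) + x 3 • EuclideanSpace.proj (𝕜 := ℝ) (3 : Fin 4)))) x := by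
  have h0 : HasFDerivAt (fun p : E4 => p 0) (EuclideanSpace.proj (𝕜 := ℝ) 0) x :=
    (EuclideanSpace.proj (𝕜 := ℝ) (0 : Fin 4)).hasFDerivAt
  have h1 : HasFDerivAt (fun p : E4 => p 1) (EuclideanSpace.proj (𝕜 := ℝ) 1) x :=
    (EuclideanSpace.proj (𝕜 := ℝ) (1 : Fin 4)).hasFDerivAt
  have h2 : HasFDerivAt (fun p : E4 => p 2) (EuclideanSpace.proj (𝕜 := ℝ) 2) x :=
    (EuclideanSpace.proj (𝕜 := ℝ) (2 : Fin 4)).hasFDerivAt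
  have h3 : HasFDerivAt (fun p : E4 => p 3) (EuclideanSpace.proj (𝕜 := ℝ) 3) x :=
    (EuclideanSpace.proj (𝕜 := ℝ) (3 : Fin 4)).hasFDerivAt
  rw [pifun_eq]
  exact ((h0.mul h0).add (h1.mul h1)).prodMk ((h2.mul h2).add (h3.mul h3))

theorem pifun_fderiv_kkps (A B : ℝ → ℝ) (x : E4) :
    (fderiv ℝ pifun x) (kkps A B x) = 0 := by
  rw [(pifun_hasFDeriv x).fderiv]
  refine Prod.ext ?_ ?_ <;>
    · simp only [ContinuousLinearMap.prod_apply, ContinuousLinearMap.add_apply,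
        ContinuousLinearMap.coe_smul', Pi.smul_apply, smul_eq_mul, PiLp.proj_apply,
        kkps, qf, Jm, Jm', PiLp.add_apply, PiLp.smul_apply,
        PiLp.toLp_apply, Matrix.cons_val_zero, Matrix.cons_val_one, Matrix.head_cons,
        Matrix.cons_val_two, Matrix.tail_cons, Matrix.cons_val_three,
        Prod.fst_zero, Prod.snd_zero]
      ring

theorem kkps_fderiv (A B : ℝ → ℝ) (hA : ContDiff ℝ (⊤ : ℕ∞) A) (hB : ContDiff ℝ (⊤ : ℕ∞) B)
    (x : E4) :
    fderiv ℝ (fun q => (⟪kkps A B q, kkps A B q⟫ : ℝ)) x (kkps A B x) = 0 := by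
  have hA' : Differentiable ℝ A := hA.differentiable (by simp)
  have hB' : Differentiable ℝ B := hB.differentiable (by simp)
  have hAf : Differentiable ℝ (fun y : ℝ × ℝ => A y.1) := hA'.comp differentiable_fst
  have hBf : Differentiable ℝ (fun y : ℝ × ℝ => B y.1) := hB'.comp differentiable_fst
  have hHd : DifferentiableAt ℝ (Hfun A B) (pifun x) :=
    ((((hAf.mul hAf).add (hBf.mul hBf)).mul (differentiable_fst.add differentiable_snd)).add
      (((hAf.mul hBf).const_mul 2).mul (differentiable_fst.sub differentiable_snd))).differentiableAt
  have hπd : DifferentiableAt ℝ pifun x := (pifun_hasFDeriv x).differentiableAt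
  rw [kkps_eq A B, fderiv_comp x hHd hπd]
  simp [pifun_fderiv_kkps A B x]

theorem diff_Jm' (x : E4) : DifferentiableAt ℝ Jm' x := by
  apply differentiableAt_E4
  intro i
  fin_cases i <;>
    · try simp only [Jm', Fin.isValue, Fin.zero_eta, Fin.mk_one, PiLp.toLp_apply, Matrix.cons_val_zero,
        Matrix.cons_val_one, Matrix.head_cons, Matrix.cons_val_two, Matrix.tail_cons,
        Matrix.cons_val_three, Matrix.cons_val_fin_one, Fin.reduceFinMk]
      first
        | exact ((diff_coord _).differentiableAt).neg
        | exact (diff_coord _).differentiableAt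

theorem diff_g (A B : ℝ → ℝ) (hA : ContDiff ℝ (⊤ : ℕ∞) A) (hB : ContDiff ℝ (⊤ : ℕ∞) B)
    (x : E4) :
    DifferentiableAt ℝ (fun q => (⟪kkps A B q, kkps A B q⟫ : ℝ)) x := by
  have hA' : Differentiable ℝ A := hA.differentiable (by simp)
  have hB' : Differentiable ℝ B := hB.differentiable (by simp)
  have hqf : DifferentiableAt ℝ qf x := by
    have : DifferentiableAt ℝ (fun p : E4 => p 0 ^ 2 + p 1 ^ 2) x := by fun_prop
    exact this
  have hk : DifferentiableAt ℝ (kkps A B) x := by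
    have hAq : DifferentiableAt ℝ (fun q => A (qf q)) x := (hA' (qf x)).comp x hqf
    have hBq : DifferentiableAt ℝ (fun q => B (qf q)) x := (hB' (qf x)).comp x hqf
    exact (hAq.smul (diff_Jm x)).add (hBq.smul (diff_Jm' x))
  exact DifferentiableAt.inner ℝ hk hk

theorem key_ne {a : ℝ} (ha : 0 < a) (ha1 : a ≠ 1) : (2048/729 : ℝ) * (a - a^3) ≠ 0 := by
  have h1 : a - a^3 = a * (1 - a) * (1 + a) := by ring
  rw [h1]
  have h2 : (1 : ℝ) - a ≠ 0 := sub_ne_zero.mpr (fun h => ha1 h.symm)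
  have h3 : (1 : ℝ) + a ≠ 0 := by positivity
  exact mul_ne_zero (by norm_num) (mul_ne_zero (mul_ne_zero ha.ne' h2) h3)

/-- for `a > 0`, `a ≠ 1`, the field `u_a = F(ψ_a)ξ + φ(grad ψ_a)` is not
localizable; consequently no isometry of the round S³ (induced by `Φ ∈ O(4)`) relates it
to a KKPS field. -/
theorem statement14 (a : ℝ) (ha : 0 < a) (ha1 : a ≠ 1)
    (F : ℝ → ℝ) (hF : ContDiff ℝ (⊤ : ℕ∞) F) :
    (∃ p : E4, ‖p‖ = 1 ∧
      fderiv ℝ (fun q => ⟪nomizuField a F q, nomizuField a F q⟫) p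
        (nomizuField a F p) ≠ 0) ∧
    ¬ ∃ (Φ : E4 ≃ₗᵢ[ℝ] E4) (A B : ℝ → ℝ), ContDiff ℝ (⊤ : ℕ∞) A ∧ ContDiff ℝ (⊤ : ℕ∞) B ∧
        ∀ p : E4, ‖p‖ = 1 → kkps A B (Φ p) = Φ (nomizuField a F p) := by
  constructor
  · exact ⟨pp, pp_norm, by rw [key_fderiv a F hF]; exact key_ne ha ha1⟩
  · rintro ⟨Φ, A, B, hA, hB, hw⟩
    have hpv : (⟪pp, nomizuField a F pp⟫ : ℝ) = 0 := by
      rw [u_pp]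
      simp only [vv, ww, pp, Jm, PiLp.inner_apply, RCLike.inner_apply, conj_trivial,
        Fin.sum_univ_four, PiLp.add_apply, PiLp.smul_apply, smul_eq_mul,
        PiLp.toLp_apply, Matrix.cons_val_zero, Matrix.cons_val_one, Matrix.head_cons,
        Matrix.cons_val_two, Matrix.tail_cons, Matrix.cons_val_three]
      ring
    set v : E4 := nomizuField a F pp with hvdef
    set k : ℝ := ‖v‖^2 with hkdef
    have hk0 : 0 ≤ k := hkdef ▸ sq_nonneg ‖v‖
    have hnorm2 : ∀ t : ℝ, ‖pp + t • v‖^2 = 1 + t^2 * k := by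
      intro t
      rw [norm_add_sq_real, pp_norm, real_inner_smul_right, hpv, norm_smul]
      simp only [Real.norm_eq_abs, mul_pow, sq_abs, one_pow]
      rw [hkdef]; ring
    have hpos : ∀ t : ℝ, (0:ℝ) < 1 + t^2 * k := by
      intro t
      have h2 : (0:ℝ) ≤ t^2 * k := mul_nonneg (sq_nonneg t) hk0
      linarith
    have hsqrtpos : ∀ t : ℝ, 0 < Real.sqrt (1 + t^2 * k) := fun t => Real.sqrt_pos.mpr (hpos t)
    set γ : ℝ → E4 := fun t => (Real.sqrt (1 + t^2 * k))⁻¹ • (pp + t • v) with hγdef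
    have hγs : ∀ t, ‖γ t‖ = 1 := by
      intro t
      have hn : ‖pp + t • v‖ = Real.sqrt (1 + t^2 * k) := by
        rw [← hnorm2 t]; exact (Real.sqrt_sq (norm_nonneg _)).symm
      simp only [hγdef]
      rw [norm_smul, norm_inv, Real.norm_eq_abs, abs_of_pos (hsqrtpos t), hn]
      exact inv_mul_cancel₀ (ne_of_gt (hsqrtpos t))
    have hγ0 : γ 0 = pp := by
      simp [hγdef, Real.sqrt_one]
    have hγd : HasDerivAt γ v 0 := by
      have hin : HasDerivAt (fun t : ℝ => 1 + t^2 * k) 0 0 := by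
        have h := ((hasDerivAt_pow 2 (0:ℝ)).mul_const k).const_add 1
        simpa using h
      have houter : HasDerivAt Real.sqrt (1/(2*Real.sqrt (1 + (0:ℝ)^2 * k)))
          (1 + (0:ℝ)^2 * k) := Real.hasDerivAt_sqrt (ne_of_gt (hpos 0))
      have hsq : HasDerivAt (fun t : ℝ => Real.sqrt (1 + t^2 * k))
          (1/(2*Real.sqrt (1 + (0:ℝ)^2 * k)) * 0) 0 := by
        simpa [Function.comp_def] using houter.comp 0 hin
      have hinv : HasDerivAt (fun t : ℝ => (Real.sqrt (1 + t^2 * k))⁻¹) 0 0 := by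
        have h := hsq.inv (ne_of_gt (hsqrtpos 0))
        have h' : HasDerivAt (fun t : ℝ => (Real.sqrt (1 + t^2 * k))⁻¹) _ 0 := h
        simpa using h'
      have hline : HasDerivAt (fun t : ℝ => pp + t • v) v 0 := by
        simpa using (((hasDerivAt_id (0:ℝ)).smul_const v).const_add pp)
      have h := hinv.smul hline
      rw [hγdef]
      have h' : HasDerivAt (fun t : ℝ => (Real.sqrt (1 + t^2 * k))⁻¹ • (pp + t • v)) _ 0 := h
      simpa [Real.sqrt_one] using h'
    have hdf : DifferentiableAt ℝ (fun q => (⟪nomizuField a F q, nomizuField a F q⟫:ℝ))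
        (γ 0) := by
      rw [hγ0]; exact diff_f a hF pp
    have h1 := hdf.hasFDerivAt.comp_hasDerivAt 0 hγd
    rw [hγ0] at h1
    have hΦγ : HasDerivAt (fun t => Φ (γ t)) (Φ v) 0 := by
      have hL := (Φ.toLinearIsometry.toContinuousLinearMap.hasFDerivAt
        (x := γ 0)).comp_hasDerivAt 0 hγd
      simpa [Function.comp_def] using hL
    have hdg : DifferentiableAt ℝ (fun q => (⟪kkps A B q, kkps A B q⟫:ℝ)) (Φ (γ 0)) :=
      diff_g A B hA hB _
    have h2 := hdg.hasFDerivAt.comp_hasDerivAt 0 hΦγ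
    rw [hγ0] at h2
    have hfg : (fun t => (⟪nomizuField a F (γ t), nomizuField a F (γ t)⟫:ℝ))
        = (fun t => (⟪kkps A B (Φ (γ t)), kkps A B (Φ (γ t))⟫:ℝ)) := by
      funext t
      rw [hw (γ t) (hγs t), LinearIsometryEquiv.inner_map_map]
    simp only [Function.comp_def] at h1 h2
    rw [hfg] at h1
    have heq := h1.unique h2
    have hΦv : Φ v = kkps A B (Φ pp) := by
      rw [hvdef]; exact (hw pp pp_norm).symm
    rw [hvdef, key_fderiv a F hF] at heq
    rw [hΦv, kkps_fderiv A B hA hB (Φ pp)] at heq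
    exact key_ne ha ha1 heq
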